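/- Let θ be a G-commutation function on a finite group G. Then the map ψ: G → {±1} defined by ψ(g) = θ(g,g) is a group homomorphism; consequently H = {g ∈ G : θ(g,g) = 1} is a subgroup of G of index at most 2. -/

import Mathlib

/-- The ordered product of a tuple of elements of a (not necessarily commutative) monoid. -/
def tupProd {M : Type*} [Monoid M] {n : ℕ} (a : Fin n → M) : M := (List.ofFn a).prod

/-- `σ ∈ Sym(ḡ)`: the permutation `σ` is admissible for the tuple `ḡ`, i.e. the products
`g_1 ⋯ g_n` and `g_{σ(1)} ⋯ g_{σ(n)}` coincide. -/
def Admissible {G : Type*} [Group G] {n : ℕ} (g : Fin n → G) (σ : Equiv.Perm (Fin n)) : Prop :=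
  tupProd g = tupProd (g ∘ σ)

/-- `θ` is the commutation function of the regular `G`-grading `Ag` on the `F`-algebra `A`. -/
structure IsRegularGradingWith (F : Type) [Field F] (G : Type) [Group G] [DecidableEq G]
    (A : Type) [Ring A] [Algebra F A] (Ag : G → Submodule F A)
    (θ : ∀ n : ℕ, (Fin n → G) → Equiv.Perm (Fin n) → Fˣ) : Prop where
  internal : DirectSum.IsInternal Ag
  mul_mem : ∀ g h : G, ∀ a ∈ Ag g, ∀ b ∈ Ag h, a * b ∈ Ag (g * h)
  regular : ∀ (n : ℕ) (g : Fin n → G), ∃ a : Fin n → A,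
      (∀ i, a i ∈ Ag (g i)) ∧ tupProd a ≠ 0
  comm : ∀ (n : ℕ) (g : Fin n → G) (σ : Equiv.Perm (Fin n)), Admissible g σ →
      ∀ a : Fin n → A, (∀ i, a i ∈ Ag (g i)) →
        tupProd a = (θ n g σ : F) • tupProd (a ∘ σ)

/-- `θ` is a `G`-commutation function: it satisfies the cocycle condition
`θ(ḡ,σ)·θ(ḡ^σ,τ) = θ(ḡ,στ)` and (equivalently to the substitution and multiplicativity
conditions of Lemma 2.6 of Aljadeff–David) it is realized as the commutation function of a
regular `G`-grading on some `F`-algebra. -/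
def IsGCommFunction (F : Type) [Field F] (G : Type) [Group G] [DecidableEq G]
    (θ : ∀ n : ℕ, (Fin n → G) → Equiv.Perm (Fin n) → Fˣ) : Prop :=
  (∀ (n : ℕ) (g : Fin n → G) (σ τ : Equiv.Perm (Fin n)),
      Admissible g σ → Admissible (g ∘ σ) τ →
      θ n g σ * θ n (g ∘ σ) τ = θ n g (σ * τ)) ∧
  ∃ (A : Type) (_ : Ring A) (_ : Algebra F A) (Ag : G → Submodule F A),
    IsRegularGradingWith F G A Ag θ

/-- `θ(g,h)` for commuting `g, h`: the value of `θ` on the pair `(g,h)` with the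
transposition `(1 2)`. -/
def pairTheta {F : Type} [Field F] {G : Type} [Group G]
    (θ : ∀ n : ℕ, (Fin n → G) → Equiv.Perm (Fin n) → Fˣ) (g h : G) : Fˣ :=
  θ 2 ![g, h] (Equiv.swap 0 1)

section Aux

variable {F : Type} [Field F] {G : Type} [Group G] [DecidableEq G]
  {A : Type} [Ring A] [Algebra F A] {Ag : G → Submodule F A}
  {θ : ∀ n : ℕ, (Fin n → G) → Equiv.Perm (Fin n) → Fˣ}

lemma tupProd_two {M : Type*} [Monoid M] (a : Fin 2 → M) : tupProd a = a 0 * a 1 := by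
  simp [tupProd, List.ofFn_succ]

lemma tupProd_three {M : Type*} [Monoid M] (a : Fin 3 → M) : tupProd a = a 0 * (a 1 * a 2) := by
  simp [tupProd, List.ofFn_succ, mul_assoc]

lemma tupProd_six {M : Type*} [Monoid M] (a : Fin 6 → M) :
    tupProd a = a 0 * (a 1 * (a 2 * (a 3 * (a 4 * a 5)))) := by
  simp [tupProd, List.ofFn_succ, mul_assoc]

lemma comp_swap01 {α : Type*} (x y : α) :
    ![x, y] ∘ (Equiv.swap 0 1 : Equiv.Perm (Fin 2)) = ![y, x] := by
  funext i; fin_cases i <;> simp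

lemma smul_cancel_ne {c d : F} {Q : A} (hQ : Q ≠ 0) (h : c • Q = d • Q) : c = d := by
  by_contra hne
  have h2 : (c - d) • Q = 0 := by rw [sub_smul, h, sub_self]
  apply hQ
  calc Q = (c - d)⁻¹ • ((c - d) • Q) := by
        rw [smul_smul, inv_mul_cancel₀ (sub_ne_zero.mpr hne), one_smul]
    _ = 0 := by rw [h2, smul_zero]

lemma pair_comm (hreg : IsRegularGradingWith F G A Ag θ) {g h : G} (hcomm : g * h = h * g)
    {u v : A} (hu : u ∈ Ag g) (hv : v ∈ Ag h) :
    u * v = (θ 2 ![g, h] (Equiv.swap 0 1) : F) • (v * u) := by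
  have adm : Admissible ![g, h] (Equiv.swap 0 1) := by
    unfold Admissible
    rw [comp_swap01, tupProd_two, tupProd_two]
    simpa using hcomm
  have key := hreg.comm 2 ![g, h] (Equiv.swap 0 1) adm ![u, v]
    (by intro i; fin_cases i <;> simpa)
  rw [comp_swap01, tupProd_two, tupProd_two] at key
  simpa using key

lemma adm_one {n : ℕ} (g : Fin n → G) : Admissible g 1 := rfl

lemma theta_one (hreg : IsRegularGradingWith F G A Ag θ) {n : ℕ} (gs : Fin n → G) :
    θ n gs 1 = 1 := by
  obtain ⟨a, hm, hne⟩ := hreg.regular n gs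
  have h := hreg.comm n gs 1 (adm_one gs) a hm
  have ha : a ∘ ⇑(1 : Equiv.Perm (Fin n)) = a := rfl
  rw [ha] at h
  have : ((θ n gs 1 : Fˣ) : F) = (1 : F) :=
    smul_cancel_ne hne (by rw [one_smul]; exact h.symm)
  exact Units.ext (by simpa using this)

end Aux

section Aux2

variable {F : Type} [Field F] {G : Type} [Group G] [DecidableEq G]
  {A : Type} [Ring A] [Algebra F A] {Ag : G → Submodule F A}
  {θ : ∀ n : ℕ, (Fin n → G) → Equiv.Perm (Fin n) → Fˣ}

lemma psi_swap (hreg : IsRegularGradingWith F G A Ag θ) {k : G} {u v : A}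
    (hu : u ∈ Ag k) (hv : v ∈ Ag k) :
    u * v = (pairTheta θ k k : F) • (v * u) :=
  pair_comm hreg rfl hu hv

lemma psi_sq (hreg : IsRegularGradingWith F G A Ag θ)
    (hc : ∀ (n : ℕ) (g : Fin n → G) (σ τ : Equiv.Perm (Fin n)),
      Admissible g σ → Admissible (g ∘ σ) τ →
      θ n g σ * θ n (g ∘ σ) τ = θ n g (σ * τ)) (k : G) :
    pairTheta θ k k * pairTheta θ k k = 1 := by
  have hfix : ![k, k] ∘ ⇑(Equiv.swap (0 : Fin 2) 1) = ![k, k] := comp_swap01 k k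
  have adm : Admissible ![k, k] (Equiv.swap 0 1) := by
    unfold Admissible; rw [hfix]
  have adm2 : Admissible (![k, k] ∘ ⇑(Equiv.swap (0 : Fin 2) 1)) (Equiv.swap 0 1) := by
    rw [hfix]; exact adm
  have key := hc 2 ![k, k] (Equiv.swap 0 1) (Equiv.swap 0 1) adm adm2
  rw [hfix, Equiv.swap_mul_self] at key
  rw [pairTheta, key, theta_one hreg]

/-- elements of the identity component commute with all homogeneous elements. -/
lemma e_comm (hreg : IsRegularGradingWith F G A Ag θ) {k : G} {u w : A}
    (hu : u ∈ Ag 1) (hw : w ∈ Ag k) : u * w = w * u := by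
  set β : Fˣ := θ 2 ![(1 : G), k] (Equiv.swap 0 1) with hβ
  have hpc : ∀ u' ∈ Ag (1 : G), ∀ w' ∈ Ag k, u' * w' = (β : F) • (w' * u') := by
    intro u' hu' w' hw'
    exact pair_comm hreg (by rw [one_mul, mul_one]) hu' hw'
  obtain ⟨a, hm, hne⟩ := hreg.regular 3 ![(1 : G), 1, k]
  have h0 : a 0 ∈ Ag (1 : G) := by simpa using hm 0
  have h1 : a 1 ∈ Ag (1 : G) := by simpa using hm 1
  have h2 : a 2 ∈ Ag k := by simpa using hm 2
  have hP : tupProd a = a 0 * (a 1 * a 2) := tupProd_three a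
  have h01 : a 0 * a 1 ∈ Ag (1 : G) := by
    have := hreg.mul_mem 1 1 _ h0 _ h1; rwa [one_mul] at this
  have way2 : tupProd a = (β : F) • (a 2 * (a 0 * a 1)) := by
    rw [hP, ← mul_assoc]
    exact hpc _ h01 _ h2
  have way1 : tupProd a = ((β : F) * (β : F)) • (a 2 * (a 0 * a 1)) := by
    rw [hP, hpc _ h1 _ h2, mul_smul_comm, ← mul_assoc, hpc _ h0 _ h2,
      smul_mul_assoc, mul_assoc, smul_smul]
  have hX : a 2 * (a 0 * a 1) ≠ 0 := by
    intro h; apply hne; rw [way2, h, smul_zero]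
  have hβ1 : (β : F) = 1 := by
    have := smul_cancel_ne hX (way1.symm.trans way2)
    have hβne : (β : F) ≠ 0 := Units.ne_zero β
    field_simp at this
    rw [this]
  rw [hpc _ hu _ hw, hβ1, one_smul]

end Aux2

section Aux3

variable {F : Type} [Field F] {G : Type} [Group G] [DecidableEq G]
  {A : Type} [Ring A] [Algebra F A] {Ag : G → Submodule F A}
  {θ : ∀ n : ℕ, (Fin n → G) → Equiv.Perm (Fin n) → Fˣ}

lemma inv_comm (hreg : IsRegularGradingWith F G A Ag θ) {k : G} {b M : A}
    (hb : b ∈ Ag k) (hM : M ∈ Ag k⁻¹) :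
    b * M = (pairTheta θ k k : F) • (M * b) := by
  set β : Fˣ := θ 2 ![k, k⁻¹] (Equiv.swap 0 1) with hβdef
  have hpc : ∀ b' ∈ Ag k, ∀ M' ∈ Ag k⁻¹, b' * M' = (β : F) • (M' * b') := by
    intro b' hb' M' hM'
    exact pair_comm hreg (by rw [mul_inv_cancel, inv_mul_cancel]) hb' hM'
  obtain ⟨a, hm, hne⟩ := hreg.regular 3 ![k⁻¹, k, k]
  have h0 : a 0 ∈ Ag k⁻¹ := by simpa using hm 0
  have h1 : a 1 ∈ Ag k := by simpa using hm 1
  have h2 : a 2 ∈ Ag k := by simpa using hm 2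
  have hP : tupProd a = a 0 * (a 1 * a 2) := tupProd_three a
  have way1 : tupProd a = (pairTheta θ k k : F) • (a 0 * (a 2 * a 1)) := by
    rw [hP, psi_swap hreg h1 h2, mul_smul_comm]
  have h01 : a 0 * a 1 ∈ Ag (1 : G) := by
    have := hreg.mul_mem k⁻¹ k _ h0 _ h1; rwa [inv_mul_cancel] at this
  have way2 : tupProd a = (β : F) • (a 0 * (a 2 * a 1)) := by
    rw [hP, ← mul_assoc, e_comm hreg h01 h2, ← mul_assoc, hpc _ h2 _ h0,
      smul_mul_assoc, mul_assoc]
  have hX : a 0 * (a 2 * a 1) ≠ 0 := by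
    intro h; apply hne; rw [way1, h, smul_zero]
  have hβψ : (β : F) = (pairTheta θ k k : F) :=
    smul_cancel_ne hX (way2.symm.trans way1)
  rw [hpc _ hb _ hM, hβψ]

lemma main_mul (hreg : IsRegularGradingWith F G A Ag θ) (g h : G) :
    ((pairTheta θ (g * h) (g * h) : Fˣ) : F) =
      ((pairTheta θ g g : Fˣ) : F) * ((pairTheta θ h h : Fˣ) : F) := by
  obtain ⟨a, hm, hne⟩ := hreg.regular 6 ![g, h, (g * h)⁻¹, g, h, (g * h)⁻¹]
  have ha1 : a 0 ∈ Ag g := by simpa using hm 0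
  have hb1 : a 1 ∈ Ag h := by simpa using hm 1
  have hd1 : a 2 ∈ Ag (g * h)⁻¹ := by simpa using hm 2
  have ha2 : a 3 ∈ Ag g := by simpa using hm 3
  have hb2 : a 4 ∈ Ag h := by simpa using hm 4
  have hd2 : a 5 ∈ Ag (g * h)⁻¹ := by simpa using hm 5
  set a₁ := a 0; set b₁ := a 1; set d₁ := a 2; set a₂ := a 3; set b₂ := a 4; set d₂ := a 5
  have hP : tupProd a = a₁ * (b₁ * (d₁ * (a₂ * (b₂ * d₂)))) := tupProd_six a
  set Q : A := d₁ * (a₁ * (b₁ * (a₂ * (b₂ * d₂)))) with hQdef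
  -- memberships of blocks
  have hu₁ : a₁ * b₁ ∈ Ag (g * h) := hreg.mul_mem g h _ ha1 _ hb1
  have hu₂ : a₂ * b₂ ∈ Ag (g * h) := hreg.mul_mem g h _ ha2 _ hb2
  have hE : d₁ * (a₂ * b₂) ∈ Ag (1 : G) := by
    have := hreg.mul_mem (g * h)⁻¹ (g * h) _ hd1 _ hu₂
    rwa [inv_mul_cancel] at this
  have hC : b₁ * (d₁ * a₂) ∈ Ag (1 : G) := by
    have h1 := hreg.mul_mem (g * h)⁻¹ g _ hd1 _ ha2
    have h2 := hreg.mul_mem h ((g * h)⁻¹ * g) _ hb1 _ h1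
    rwa [show h * ((g * h)⁻¹ * g) = 1 by group] at h2
  have hMm : d₁ * a₁ ∈ Ag h⁻¹ := by
    have h1 := hreg.mul_mem (g * h)⁻¹ g _ hd1 _ ha1
    rwa [show (g * h)⁻¹ * g = h⁻¹ by group] at h1
  -- Way A
  have wayA : tupProd a = (pairTheta θ (g * h) (g * h) : F) • Q := by
    calc tupProd a = ((a₁ * b₁) * (d₁ * (a₂ * b₂))) * d₂ := by
          rw [hP]; simp only [mul_assoc]
      _ = ((d₁ * (a₂ * b₂)) * (a₁ * b₁)) * d₂ := by
          rw [← e_comm hreg hE hu₁]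
      _ = (d₁ * ((a₂ * b₂) * (a₁ * b₁))) * d₂ := by simp only [mul_assoc]
      _ = (pairTheta θ (g * h) (g * h) : F) • Q := by
          rw [psi_swap hreg hu₂ hu₁, mul_smul_comm, smul_mul_assoc, hQdef]
          congr 1
          simp only [mul_assoc]
  -- Way B
  have wayB : tupProd a =
      ((pairTheta θ g g : F) * (pairTheta θ h h : F)) • Q := by
    calc tupProd a = (a₁ * (b₁ * (d₁ * a₂))) * (b₂ * d₂) := by
          rw [hP]; simp only [mul_assoc]
      _ = ((b₁ * (d₁ * a₂)) * a₁) * (b₂ * d₂) := by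
          rw [← e_comm hreg hC ha1]
      _ = b₁ * (d₁ * ((a₂ * a₁) * (b₂ * d₂))) := by simp only [mul_assoc]
      _ = (pairTheta θ g g : F) • ((b₁ * (d₁ * a₁)) * (a₂ * (b₂ * d₂))) := by
          rw [psi_swap hreg ha2 ha1, smul_mul_assoc, mul_smul_comm, mul_smul_comm]
          congr 1
          simp only [mul_assoc]
      _ = ((pairTheta θ g g : F) * (pairTheta θ h h : F)) • Q := by
          rw [inv_comm hreg hb1 hMm, smul_mul_assoc, smul_smul, hQdef]
          simp only [mul_assoc]
  have hQ : Q ≠ 0 := by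
    intro h0; apply hne; rw [wayA, h0, smul_zero]
  exact smul_cancel_ne hQ (wayA.symm.trans wayB)

end Aux3

/-- for a `G`-commutation function on a finite group, `ψ(g) = θ(g,g)` is a
homomorphism `G → {±1}`; consequently `H = {g : θ(g,g) = 1}` is a subgroup of index ≤ 2. -/
theorem theta_diag_hom_and_index_le_two (F : Type) [Field F] (G : Type) [Group G]
    [Fintype G] [DecidableEq G] (θ : ∀ n : ℕ, (Fin n → G) → Equiv.Perm (Fin n) → Fˣ)
    (hθ : IsGCommFunction F G θ) :
    (∀ g : G, pairTheta θ g g = 1 ∨ pairTheta θ g g = -1) ∧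
    (∀ g h : G, pairTheta θ (g * h) (g * h) = pairTheta θ g g * pairTheta θ h h) ∧
    ∃ H : Subgroup G, (∀ g : G, g ∈ H ↔ pairTheta θ g g = 1) ∧ H.index ≤ 2 := by
  obtain ⟨hc, A, _ringA, _algA, Ag, hreg⟩ := hθ
  have part1 : ∀ g : G, pairTheta θ g g = 1 ∨ pairTheta θ g g = -1 := by
    intro g
    have hsq := psi_sq hreg hc g
    have hF : ((pairTheta θ g g : Fˣ) : F) * ((pairTheta θ g g : Fˣ) : F) = 1 := by
      have := congrArg Units.val hsq
      rwa [Units.val_mul, Units.val_one] at this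
    rcases mul_self_eq_one_iff.mp hF with h | h
    · left; exact Units.ext (by simpa using h)
    · right; exact Units.ext (by simpa using h)
  have part2 : ∀ g h : G,
      pairTheta θ (g * h) (g * h) = pairTheta θ g g * pairTheta θ h h := by
    intro g h
    exact Units.ext (by rw [Units.val_mul]; exact main_mul hreg g h)
  refine ⟨part1, part2, ?_⟩
  have hone : pairTheta θ (1 : G) (1 : G) = 1 := by
    have h11 := part2 1 1
    rw [one_mul] at h11
    exact (left_eq_mul.mp h11)
  let φ : G →* Fˣ := { toFun := fun g => pairTheta θ g g, map_one' := hone,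
                       map_mul' := part2 }
  refine ⟨φ.ker, fun g => by simp [MonoidHom.mem_ker, φ], ?_⟩
  rw [Subgroup.index_ker]
  have hsub : (φ.range : Set Fˣ) ⊆ {1, -1} := by
    rintro x ⟨g, rfl⟩
    rcases part1 g with h | h
    · exact Or.inl h
    · exact Or.inr h
  calc Nat.card ↥φ.range = (φ.range : Set Fˣ).ncard := by
        rw [← Nat.card_coe_set_eq]; rfl
    _ ≤ ({1, -1} : Set Fˣ).ncard := Set.ncard_le_ncard hsub (Set.toFinite _)
    _ ≤ 2 := by
        simpa [Set.ncard_singleton] using Set.ncard_insert_le (1 : Fˣ) {-1}
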